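/- Let Q̂ and Q* be real-valued functions on a finite nonempty action set A, and let τ > 0. Define the Boltzmann distributions P̂(a) = exp(Q̂(a)/τ)/Σ_{a'} exp(Q̂(a')/τ) and P*(a) = exp(Q*(a)/τ)/Σ_{a'} exp(Q*(a')/τ). Then the KL divergence satisfies D_KL(P̂ ‖ P*) ≤ (2/τ) · max_a |Q̂(a) - Q*(a)|. -/

import Mathlib

open Real Finset

theorem kl_softmax_le (A : Type*) [Fintype A] [Nonempty A]
    (Qhat Qstar : A → ℝ) (τ : ℝ) (hτ : 0 < τ)
    (Phat Pstar : A → ℝ)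
    (hPhat : ∀ a, Phat a = exp (Qhat a / τ) / ∑ a' : A, exp (Qhat a' / τ))
    (hPstar : ∀ a, Pstar a = exp (Qstar a / τ) / ∑ a' : A, exp (Qstar a' / τ)) :
    ∑ a : A, Phat a * Real.log (Phat a / Pstar a) ≤
      (2 / τ) * Finset.univ.sup' Finset.univ_nonempty (fun a => |Qhat a - Qstar a|) := by
  set ε := Finset.univ.sup' Finset.univ_nonempty (fun a => |Qhat a - Qstar a|) with hε
  set Sh := ∑ a' : A, exp (Qhat a' / τ) with hSh
  set Ss := ∑ a' : A, exp (Qstar a' / τ) with hSs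
  have hShpos : 0 < Sh := Finset.sum_pos (fun a _ => exp_pos _) Finset.univ_nonempty
  have hSspos : 0 < Ss := Finset.sum_pos (fun a _ => exp_pos _) Finset.univ_nonempty
  have habs : ∀ a : A, |Qhat a - Qstar a| ≤ ε := fun a =>
    Finset.le_sup' (fun a => |Qhat a - Qstar a|) (Finset.mem_univ a)
  have hPhatpos : ∀ a, 0 < Phat a := fun a => by
    rw [hPhat a]; exact div_pos (exp_pos _) hShpos
  have hsum1 : ∑ a : A, Phat a = 1 := by
    simp only [hPhat]
    rw [← Finset.sum_div, ← hSh, div_self (ne_of_gt hShpos)]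
  have hlog : ∀ a : A, Real.log (Phat a / Pstar a)
      = (Qhat a - Qstar a) / τ + (Real.log Ss - Real.log Sh) := by
    intro a
    rw [hPhat a, hPstar a]
    rw [Real.log_div (div_pos (exp_pos _) hShpos).ne' (div_pos (exp_pos _) hSspos).ne',
      Real.log_div (exp_pos _).ne' hShpos.ne', Real.log_div (exp_pos _).ne' hSspos.ne',
      Real.log_exp, Real.log_exp]
    ring
  have hlogS : Real.log Ss - Real.log Sh ≤ ε / τ := by
    have hle : Ss ≤ exp (ε / τ) * Sh := by
      rw [hSs, hSh, Finset.mul_sum]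
      refine Finset.sum_le_sum fun a _ => ?_
      rw [← Real.exp_add]
      apply Real.exp_le_exp.mpr
      have : Qstar a - Qhat a ≤ ε := (abs_le.mp (by rw [abs_sub_comm]; exact habs a)).2
      rw [← add_div, div_le_div_iff₀ hτ hτ]
      nlinarith
    calc Real.log Ss - Real.log Sh ≤ Real.log (exp (ε / τ) * Sh) - Real.log Sh :=
          sub_le_sub_right (Real.log_le_log hSspos hle) _
      _ = ε / τ := by rw [Real.log_mul (exp_pos _).ne' hShpos.ne', Real.log_exp]; ring
  calc ∑ a : A, Phat a * Real.log (Phat a / Pstar a)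
      = ∑ a : A, (Phat a * ((Qhat a - Qstar a) / τ)
          + Phat a * (Real.log Ss - Real.log Sh)) := by
        refine Finset.sum_congr rfl fun a _ => ?_
        rw [hlog a]; ring
    _ = (∑ a : A, Phat a * ((Qhat a - Qstar a) / τ))
          + (Real.log Ss - Real.log Sh) * ∑ a : A, Phat a := by
        rw [Finset.sum_add_distrib, Finset.mul_sum]
        congr 1
        exact Finset.sum_congr rfl fun a _ => by ring
    _ ≤ (∑ a : A, Phat a * (ε / τ)) + ε / τ := by
        rw [hsum1, mul_one]
        refine add_le_add (Finset.sum_le_sum fun a _ => ?_) hlogS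
        refine mul_le_mul_of_nonneg_left ?_ (hPhatpos a).le
        exact (div_le_div_iff_of_pos_right hτ).mpr ((le_abs_self _).trans (habs a))
    _ = (2 / τ) * ε := by
        rw [← Finset.sum_mul, hsum1, one_mul]; ring
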